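/- Let (W, S) be a Coxeter system with length function ℓ, and let σ be a group automorphism of W with σ(S) = S. Let w ∈ W and suppose there is a constant C ≥ 0 such that ℓ(g_m(w)) ≥ m · ℓ(w) − C for all m ≥ 1, where g_m(w) = w · σ(w) ⋯ σ^{m−1}(w). Then w is σ-straight, i.e., ℓ(g_m(w)) = m · ℓ(w) for all m ≥ 1. -/

import Mathlib

/-- For an automorphism `σ` of a group `W` and `w ∈ W`, the twisted product
`g_m(w) = w · σ(w) · σ²(w) ⋯ σ^{m−1}(w)`. -/
def twistProd {W : Type*} [Group W] (σ : W → W) (w : W) (m : ℕ) : W :=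
  ((List.range m).map fun i => σ^[i] w).prod

section aux
variable {B W : Type*} [Group W] {M : CoxeterMatrix B} (cs : CoxeterSystem M W)

/-- If a monoid hom maps simples into simples, it doesn't increase length. -/
lemma length_apply_le (σ : W →* W)
    (h : ∀ i, ∃ j, σ (cs.simple i) = cs.simple j) (v : W) :
    cs.length (σ v) ≤ cs.length v := by
  obtain ⟨ω, hlen, rfl⟩ := cs.exists_reduced_word v
  choose f hf using h
  have key : ∀ ω : List B, σ (cs.wordProd ω) = cs.wordProd (ω.map f) := by
    intro ω
    induction ω with
    | nil => simp [CoxeterSystem.wordProd]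
    | cons i ω ih =>
      rw [CoxeterSystem.wordProd_cons, map_mul, ih, List.map_cons,
        CoxeterSystem.wordProd_cons, hf]
  have this := key ω
  rw [this, (hlen : cs.length (cs.wordProd ω) = ω.length)]
  simpa using cs.length_wordProd_le (ω.map f)

lemma length_equiv_eq (σ : W ≃* W)
    (hσS : ⇑σ '' Set.range cs.simple = Set.range cs.simple) (v : W) :
    cs.length (σ v) = cs.length v := by
  have h1 : ∀ i, ∃ j, σ (cs.simple i) = cs.simple j := by
    intro i
    have : σ (cs.simple i) ∈ Set.range cs.simple := by
      rw [← hσS]; exact ⟨cs.simple i, ⟨i, rfl⟩, rfl⟩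
    obtain ⟨j, hj⟩ := this
    exact ⟨j, hj.symm⟩
  have h2 : ∀ i, ∃ j, σ.symm (cs.simple i) = cs.simple j := by
    intro i
    have : cs.simple i ∈ ⇑σ '' Set.range cs.simple := by
      rw [hσS]; exact ⟨i, rfl⟩
    obtain ⟨x, ⟨j, rfl⟩, hx⟩ := this
    exact ⟨j, by rw [← hx, MulEquiv.symm_apply_apply]⟩
  refine le_antisymm (length_apply_le cs σ.toMonoidHom h1 v) ?_
  have := length_apply_le cs σ.symm.toMonoidHom h2 (σ v)
  simpa using this

end aux

/-- If `(W, S)` is a Coxeter system, `σ` an automorphism of `W` with `σ(S) = S`,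
`w ∈ W`, and there is a constant `C ≥ 0` with `ℓ(g_m(w)) ≥ m·ℓ(w) − C` for all
`m ≥ 1`, then `w` is `σ`-straight: `ℓ(g_m(w)) = m·ℓ(w)` for all `m ≥ 1`. -/
theorem straight_of_linear_lower_bound {B W : Type*} [Group W] {M : CoxeterMatrix B}
    (cs : CoxeterSystem M W) (σ : W ≃* W)
    (hσS : ⇑σ '' Set.range cs.simple = Set.range cs.simple)
    (w : W) (C : ℤ) (hC : 0 ≤ C)
    (hbound : ∀ m : ℕ, 1 ≤ m →
      (m : ℤ) * (cs.length w : ℤ) - C ≤ (cs.length (twistProd σ w m) : ℤ)) :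
    ∀ m : ℕ, 1 ≤ m → cs.length (twistProd σ w m) = m * cs.length w := by
  -- σ^[n] preserves length
  have hlen : ∀ n (v : W), cs.length (σ^[n] v) = cs.length v := by
    intro n
    induction n with
    | zero => simp
    | succ n ih =>
      intro v
      rw [Function.iterate_succ_apply', length_equiv_eq cs σ hσS, ih]
  have hmul : ∀ n (a b : W), σ^[n] (a * b) = σ^[n] a * σ^[n] b := by
    intro n
    induction n with
    | zero => simp
    | succ n ih =>
      intro a b
      rw [Function.iterate_succ_apply', ih, map_mul, Function.iterate_succ_apply',
        Function.iterate_succ_apply']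
  -- concatenation formula
  have hconcat : ∀ m k, twistProd σ w (m + k) = twistProd σ w m * σ^[m] (twistProd σ w k) := by
    intro m k
    unfold twistProd
    rw [List.range_add, List.map_append, List.prod_append]
    congr 1
    rw [List.map_map]
    induction (List.range k) with
    | nil => simp
    | cons i l ih =>
      simp only [List.map_cons, List.prod_cons, hmul, ih]
      congr 1
      simp [Function.iterate_add_apply, Function.comp]
  -- subadditivity
  have hsub : ∀ m k, cs.length (twistProd σ w (m + k)) ≤
      cs.length (twistProd σ w m) + cs.length (twistProd σ w k) := by
    intro m k
    rw [hconcat]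
    calc cs.length _ ≤ cs.length (twistProd σ w m) + cs.length (σ^[m] (twistProd σ w k)) :=
          cs.length_mul_le _ _
      _ = _ := by rw [hlen]
  -- upper bound ℓ(g_m) ≤ m ℓ(w)
  have hup : ∀ m, cs.length (twistProd σ w m) ≤ m * cs.length w := by
    intro m
    induction m with
    | zero => simp [twistProd]
    | succ m ih =>
      calc cs.length (twistProd σ w (m + 1))
          ≤ cs.length (twistProd σ w m) + cs.length (twistProd σ w 1) := hsub m 1
        _ ≤ m * cs.length w + cs.length w := by
            have : twistProd σ w 1 = w := by simp [twistProd]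
            rw [this]; omega
        _ = (m + 1) * cs.length w := by ring
  -- ℓ(g_{mk}) ≤ k ℓ(g_m)
  have hiter : ∀ m k, cs.length (twistProd σ w (m * k)) ≤ k * cs.length (twistProd σ w m) := by
    intro m k
    induction k with
    | zero => simp [twistProd]
    | succ k ih =>
      have : m * (k + 1) = m * k + m := by ring
      rw [this]
      calc cs.length (twistProd σ w (m * k + m))
          ≤ cs.length (twistProd σ w (m * k)) + cs.length (twistProd σ w m) := hsub _ _
        _ ≤ (k + 1) * cs.length (twistProd σ w m) := by rw [Nat.succ_mul]; omega
  intro m hm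
  refine le_antisymm (hup m) ?_
  by_contra h
  push_neg at h
  have hlt : cs.length (twistProd σ w m) + 1 ≤ m * cs.length w := h
  set k := C.toNat + 1 with hk
  have hmk : 1 ≤ m * k := Nat.one_le_iff_ne_zero.mpr (by positivity)
  have hb := hbound (m * k) hmk
  have h2 : (cs.length (twistProd σ w (m * k)) : ℤ) ≤ k * cs.length (twistProd σ w m) := by
    exact_mod_cast hiter m k
  have h3 : (cs.length (twistProd σ w m) : ℤ) + 1 ≤ m * cs.length w := by exact_mod_cast hlt
  have hCk : (k : ℤ) = C + 1 := by simp [hk, Int.toNat_of_nonneg hC]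
  push_cast at hb h2
  rw [hCk] at hb h2
  nlinarith [mul_le_mul_of_nonneg_left h3 (show (0:ℤ) ≤ C + 1 by linarith)]
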